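/- Let φ_1,...,φ_n ∈ ℂ and define the n×n matrix X(φ) by X^k_j = e_{j-1}(φ_1,...,φ̂_k,...,φ_n), the (j-1)-st elementary symmetric polynomial in the variables φ_1,...,φ_n with φ_k omitted. Then det X(φ) = ∏_{j<k} (φ_j - φ_k). -/

import Mathlib

set_option maxHeartbeats 1000000


open Matrix BigOperators Finset

noncomputable section

/-- The matrix `X(φ)` with entries `X^k_j = e_{j-1}(φ_1, …, φ̂_k, …, φ_n)`: row `k`, column `j`
(0-indexed here, so column `j` carries the elementary symmetric polynomial of degree `j`)
in the `n-1` values `φ` with the `k`-th one omitted. -/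
def Xmat (n : ℕ) (φ : Fin n → ℂ) : Matrix (Fin n) (Fin n) ℂ := fun k j =>
  (((Finset.univ.erase k).val.map φ).esymm (j : ℕ))

lemma aux_esymm_map {R S : Type*} [CommRing R] [CommRing S] (f : R →+* S) (s : Multiset R)
    (j : ℕ) : f (s.esymm j) = (s.map f).esymm j := by
  rw [Multiset.esymm, Multiset.esymm, map_multiset_sum, Multiset.map_map,
    Multiset.powersetCard_map, Multiset.map_map]
  refine congrArg Multiset.sum (Multiset.map_congr rfl fun t _ => ?_)
  exact map_multiset_prod f t

lemma aux_prod_pairs {n : ℕ} {M : Type*} [CommMonoid M] (f : Fin n → Fin n → M) :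
    ∏ p ∈ Finset.univ.filter (fun p : Fin n × Fin n => p.1 < p.2), f p.1 p.2
      = ∏ k : Fin n, ∏ i ∈ Finset.Ioi k, f k i := by
  rw [Finset.prod_sigma']
  refine Finset.prod_nbij' (fun p => ⟨p.1, p.2⟩) (fun p => (p.1, p.2)) ?_ ?_ ?_ ?_ ?_ <;>
    simp [Finset.mem_sigma, Finset.mem_Ioi]

lemma aux_det_esymm_field {K : Type*} [Field K] (n : ℕ) (v : Fin n → K)
    (hv : Function.Injective v) (h0 : ∀ i, v i ≠ 0) :
    (Matrix.of fun k j : Fin n => (((Finset.univ.erase k).val.map v).esymm (j : ℕ))).det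
      = ∏ p ∈ Finset.univ.filter (fun p : Fin n × Fin n => p.1 < p.2), (v p.1 - v p.2) := by
  classical
  rcases n with _ | m
  · simp
  rw [aux_prod_pairs (fun a b => v a - v b)]
  set w : Fin (m+1) → K := fun l => -(v l)⁻¹ with hw
  set A : Matrix (Fin (m+1)) (Fin (m+1)) K :=
    Matrix.of fun j l => (-1 : K) ^ (j : ℕ) * v l ^ (m - (j : ℕ)) with hA
  have hcard : ∀ k : Fin (m+1), Multiset.card ((Finset.univ.erase k).val.map v) = m := by
    intro k
    rw [Multiset.card_map, ← Finset.card_def, Finset.card_erase_of_mem (Finset.mem_univ k),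
      Finset.card_univ, Fintype.card_fin]
    omega
  have key : ∀ (k : Fin (m+1)) (x : K), ∏ i ∈ Finset.univ.erase k, (x - v i)
      = ∑ j : Fin (m+1), (-1 : K) ^ (j : ℕ)
          * (((Finset.univ.erase k).val.map v).esymm (j : ℕ) * x ^ (m - (j : ℕ))) := by
    intro k x
    have h := Multiset.prod_X_sub_X_eq_sum_esymm ((Finset.univ.erase k).val.map v)
    have h2 := congrArg (Polynomial.eval x) h
    rw [Polynomial.eval_multiset_prod, Polynomial.eval_finset_sum, hcard,
      Multiset.map_map] at h2
    simp only [Function.comp, Polynomial.eval_mul, Polynomial.eval_pow, Polynomial.eval_neg,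
      Polynomial.eval_one, Polynomial.eval_sub, Polynomial.eval_X, Polynomial.eval_C] at h2
    rw [Fin.sum_univ_eq_sum_range (fun j => (-1 : K) ^ j
      * (((Finset.univ.erase k).val.map v).esymm j * x ^ (m - j)))]
    rw [Finset.prod_eq_multiset_prod]
    rw [Multiset.map_map] at h2
    exact h2
  have hMA : (Matrix.of fun k j : Fin (m+1) =>
        (((Finset.univ.erase k).val.map v).esymm (j : ℕ))) * A
      = Matrix.diagonal (fun k => ∏ i ∈ Finset.univ.erase k, (v k - v i)) := by
    ext k l
    rw [Matrix.mul_apply]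
    rcases eq_or_ne k l with rfl | hkl
    · rw [Matrix.diagonal_apply_eq, key k (v k)]
      exact Finset.sum_congr rfl fun j _ => by simp only [Matrix.of_apply, hA]; ring
    · rw [Matrix.diagonal_apply_ne _ hkl]
      have hz : ∏ i ∈ Finset.univ.erase k, (v l - v i) = 0 :=
        Finset.prod_eq_zero (Finset.mem_erase.mpr ⟨Ne.symm hkl, Finset.mem_univ l⟩) (sub_self _)
      rw [← hz, key k (v l)]
      exact Finset.sum_congr rfl fun j _ => by simp only [Matrix.of_apply, hA]; ring
  have hAfact : A = (Matrix.vandermonde w)ᵀ * Matrix.diagonal (fun l => v l ^ m) := by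
    ext j l
    rw [Matrix.mul_diagonal, Matrix.transpose_apply, Matrix.vandermonde_apply]
    have hj : (j : ℕ) ≤ m := Nat.lt_succ_iff.mp j.isLt
    have hsplit : v l ^ m = v l ^ (m - (j : ℕ)) * v l ^ (j : ℕ) := by
      rw [← pow_add]; congr 1; omega
    have h1 : w l ^ (j : ℕ) = (-1 : K) ^ (j : ℕ) * ((v l)⁻¹) ^ (j : ℕ) := by
      rw [hw]; rw [neg_pow, inv_pow]
    rw [hA, Matrix.of_apply, h1, hsplit]
    have h2 : ((v l)⁻¹) ^ (j : ℕ) * v l ^ (j : ℕ) = 1 := by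
      rw [← mul_pow, inv_mul_cancel₀ (h0 l), one_pow]
    calc (-1 : K) ^ (j : ℕ) * v l ^ (m - (j : ℕ))
        = (-1 : K) ^ (j : ℕ) * (((v l)⁻¹) ^ (j : ℕ) * v l ^ (j : ℕ)) * v l ^ (m - (j : ℕ)) := by
          rw [h2, mul_one]
      _ = (-1 : K) ^ (j : ℕ) * ((v l)⁻¹) ^ (j : ℕ) * (v l ^ (m - (j : ℕ)) * v l ^ (j : ℕ)) := by
          ring
  have hvand : ∀ i j : Fin (m+1), w j - w i = (v j - v i) * ((v i)⁻¹ * (v j)⁻¹) := by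
    intro i j
    have hji : v j * (v j)⁻¹ = 1 := mul_inv_cancel₀ (h0 j)
    have hii : v i * (v i)⁻¹ = 1 := mul_inv_cancel₀ (h0 i)
    simp only [hw]
    rw [sub_mul,
      show v j * ((v i)⁻¹ * (v j)⁻¹) = (v i)⁻¹ * (v j * (v j)⁻¹) by ring,
      show v i * ((v i)⁻¹ * (v j)⁻¹) = (v j)⁻¹ * (v i * (v i)⁻¹) by ring,
      hji, hii, mul_one, mul_one]
    ring
  have hdetA : A.det = ∏ i : Fin (m+1), ∏ j ∈ Finset.Ioi i, (v j - v i) := by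
    rw [hAfact, Matrix.det_mul, Matrix.det_transpose, Matrix.det_vandermonde,
      Matrix.det_diagonal]
    have h1 : ∀ i : Fin (m+1), ∏ j ∈ Finset.Ioi i, (w j - w i)
        = (∏ j ∈ Finset.Ioi i, (v j - v i))
          * (((v i)⁻¹) ^ (m - (i : ℕ)) * ∏ j ∈ Finset.Ioi i, (v j)⁻¹) := by
      intro i
      rw [Finset.prod_congr rfl (fun j _ => hvand i j), Finset.prod_mul_distrib,
        Finset.prod_mul_distrib, Finset.prod_const, Fin.card_Ioi]
      simp only [Nat.add_sub_cancel]
    rw [Finset.prod_congr rfl (fun i _ => h1 i), Finset.prod_mul_distrib,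
      Finset.prod_mul_distrib]
    have h2 : ∏ i : Fin (m+1), ∏ j ∈ Finset.Ioi i, (v j)⁻¹
        = ∏ j : Fin (m+1), ((v j)⁻¹) ^ (j : ℕ) := by
      rw [Finset.prod_comm' (t' := (Finset.univ : Finset (Fin (m+1))))
        (s' := fun j => Finset.Iio j)
        (fun x y => by simp [Finset.mem_Ioi, Finset.mem_Iio, and_comm])]
      exact Finset.prod_congr rfl fun j _ => by rw [Finset.prod_const, Fin.card_Iio]
    rw [h2, mul_assoc, mul_assoc, ← Finset.prod_mul_distrib, ← Finset.prod_mul_distrib]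
    have h3 : ∀ i : Fin (m+1),
        ((v i)⁻¹) ^ (m - (i : ℕ)) * (((v i)⁻¹) ^ (i : ℕ) * v i ^ m) = 1 := by
      intro i
      have hi : (i : ℕ) ≤ m := Nat.lt_succ_iff.mp i.isLt
      rw [← mul_assoc, ← pow_add]
      have hmi : m - (i : ℕ) + (i : ℕ) = m := by omega
      rw [hmi, ← mul_pow, inv_mul_cancel₀ (h0 i), one_pow]
    rw [Finset.prod_congr rfl (fun i _ => h3 i), Finset.prod_const_one, mul_one]
  have herase : ∀ k : Fin (m+1),
      ∏ i ∈ Finset.univ.erase k, (v k - v i)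
        = (∏ i ∈ Finset.Iio k, (v k - v i)) * ∏ i ∈ Finset.Ioi k, (v k - v i) := by
    intro k
    have hset : Finset.univ.erase k = Finset.Iio k ∪ Finset.Ioi k := by
      ext i
      simp only [Finset.mem_erase, Finset.mem_univ, and_true, Finset.mem_union,
        Finset.mem_Iio, Finset.mem_Ioi]
      exact ⟨fun h => lt_or_gt_of_ne h, fun h => h.elim ne_of_lt ne_of_gt⟩
    have hdisj : Disjoint (Finset.Iio k) (Finset.Ioi k) := by
      rw [Finset.disjoint_left]
      intro a ha ha'
      exact absurd (Finset.mem_Ioi.mp ha') (not_lt.mpr (le_of_lt (Finset.mem_Iio.mp ha)))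
    rw [hset, Finset.prod_union hdisj]
  have hprod_d : ∏ k : Fin (m+1), ∏ i ∈ Finset.univ.erase k, (v k - v i)
      = (∏ k : Fin (m+1), ∏ i ∈ Finset.Ioi k, (v k - v i))
        * (∏ i : Fin (m+1), ∏ j ∈ Finset.Ioi i, (v j - v i)) := by
    rw [Finset.prod_congr rfl (fun k _ => herase k), Finset.prod_mul_distrib, mul_comm]
    congr 1
    exact Finset.prod_comm' (t' := (Finset.univ : Finset (Fin (m+1))))
      (s' := fun i => Finset.Ioi i)
      (fun x y => by simp [Finset.mem_Ioi, Finset.mem_Iio, and_comm])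
  have hbne : (∏ i : Fin (m+1), ∏ j ∈ Finset.Ioi i, (v j - v i)) ≠ 0 := by
    rw [Finset.prod_ne_zero_iff]
    intro i _
    rw [Finset.prod_ne_zero_iff]
    intro j hj
    exact sub_ne_zero.mpr fun h => (Finset.mem_Ioi.mp hj).ne' (hv h)
  have hdet := congrArg Matrix.det hMA
  rw [Matrix.det_mul, Matrix.det_diagonal, hprod_d, hdetA] at hdet
  exact mul_right_cancel₀ hbne hdet

/-- `det X(φ) = ∏_{j<k} (φ_j - φ_k)`. -/
theorem det_Xmat (n : ℕ) (φ : Fin n → ℂ) :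
    (Xmat n φ).det
      = ∏ p ∈ Finset.univ.filter (fun p : Fin n × Fin n => p.1 < p.2), (φ p.1 - φ p.2) := by
  classical
  set R := MvPolynomial (Fin n) ℂ
  set K := FractionRing R
  set ι : R →+* K := algebraMap R K with hιdef
  have hι : Function.Injective ι := IsFractionRing.injective R K
  set v : Fin n → K := fun i => ι (MvPolynomial.X i) with hvdef
  have hv : Function.Injective v := fun i j h => MvPolynomial.X_injective (hι h)
  have h0 : ∀ i, v i ≠ 0 := by
    intro i h
    exact MvPolynomial.X_ne_zero i (hι (by simpa using h))
  set N : Matrix (Fin n) (Fin n) R :=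
    Matrix.of fun k j => (((Finset.univ.erase k).val.map MvPolynomial.X).esymm (j : ℕ)) with hN
  have hmapK : N.map ι
      = Matrix.of fun k j : Fin n => (((Finset.univ.erase k).val.map v).esymm (j : ℕ)) := by
    ext k j
    simp only [Matrix.map_apply, hN, Matrix.of_apply, aux_esymm_map, Multiset.map_map]
    rfl
  have hdetN : N.det = ∏ p ∈ Finset.univ.filter (fun p : Fin n × Fin n => p.1 < p.2),
      (MvPolynomial.X p.1 - MvPolynomial.X p.2) := by
    apply hι
    rw [RingHom.map_det, RingHom.mapMatrix_apply, hmapK, aux_det_esymm_field n v hv h0, map_prod]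
    simp [hvdef]
  have hmapC : N.map (MvPolynomial.aeval φ).toRingHom = Xmat n φ := by
    ext k j
    simp only [Matrix.map_apply, hN, Matrix.of_apply, Xmat]
    rw [aux_esymm_map, Multiset.map_map]
    congr 1
    refine Multiset.map_congr rfl fun i _ => ?_
    simp
  calc (Xmat n φ).det = ((MvPolynomial.aeval φ).toRingHom) N.det := by
        rw [RingHom.map_det, RingHom.mapMatrix_apply, hmapC]
      _ = _ := by
        rw [hdetN, map_prod]
        simp
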